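/- arXiv:1411.6152 — 3 statements merged into one kernel-verified Lean document; each statement's English description precedes it below -/
import Mathlib

section
/- For every α > 0, σ > 0 and μ ∈ ℝ, one has sup_{z ∈ E_{1+ασ}} |f_{σ,μ}(z)| ≤ e^{α²}, i.e. the modulus of the Gaussian function on the Bernstein ellipse with parameter χ = 1 + ασ is at most e^{α²}. -/
/-- The closed Bernstein ellipse region with parameter `χ`: the region bounded by the
ellipse with foci `±1` and half-axes `a = (χ²+1)/(2χ)`, `b = (χ²-1)/(2χ)`. -/
noncomputable def bernsteinEllipse (χ : ℝ) : Set ℂ :=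
  {z : ℂ | z.re ^ 2 / ((χ ^ 2 + 1) / (2 * χ)) ^ 2
    + z.im ^ 2 / ((χ ^ 2 - 1) / (2 * χ)) ^ 2 ≤ 1}

/-- Best approximation error of `f` on `[-1,1]` by real polynomials of degree ≤ `k`. -/
noncomputable def approxError (f : ℝ → ℝ) (k : ℕ) : ℝ :=
  sInf {e : ℝ | ∃ p : Polynomial ℝ, p.natDegree ≤ k ∧
    e = ⨆ x : Set.Icc (-1 : ℝ) 1, |f x.1 - p.eval x.1|}

/-- The Gaussian function `f_{σ,μ}(z) = exp (-(z-μ)²/σ²)` on `ℂ`. -/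
noncomputable def gaussFun (σ μ : ℝ) (z : ℂ) : ℂ :=
  Complex.exp (-(z - (μ : ℂ)) ^ 2 / (σ : ℂ) ^ 2)

/-- The modulus of the Gaussian `f_{σ,μ}` on the Bernstein ellipse with parameter
`χ = 1 + ασ` is at most `e^{α²}`. -/
theorem gauss_sup_on_ellipse_le (α σ μ : ℝ) (hα : 0 < α) (hσ : 0 < σ) :
    (⨆ z : bernsteinEllipse (1 + α * σ), ‖gaussFun σ μ z‖) ≤
      Real.exp (α ^ 2) := by
  have hχ1 : (1:ℝ) < 1 + α * σ := by nlinarith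
  have hχ0 : (0:ℝ) < 1 + α * σ := by linarith
  apply Real.iSup_le _ (Real.exp_pos _).le
  rintro ⟨z, hz⟩
  simp only [bernsteinEllipse, Set.mem_setOf_eq] at hz
  set χ := 1 + α * σ with hχ
  have hb0 : (0:ℝ) < (χ ^ 2 - 1) / (2 * χ) := by
    apply div_pos <;> nlinarith
  have him : z.im ^ 2 ≤ ((χ ^ 2 - 1) / (2 * χ)) ^ 2 := by
    have h1 : z.im ^ 2 / ((χ ^ 2 - 1) / (2 * χ)) ^ 2 ≤ 1 := by
      have : 0 ≤ z.re ^ 2 / ((χ ^ 2 + 1) / (2 * χ)) ^ 2 := by positivity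
      linarith
    exact (div_le_one (by positivity)).mp h1
  have hble : (χ ^ 2 - 1) / (2 * χ) ≤ α * σ := by
    rw [div_le_iff₀ (by nlinarith)]
    nlinarith
  have him2 : z.im ^ 2 ≤ (α * σ) ^ 2 := by
    calc z.im ^ 2 ≤ ((χ ^ 2 - 1) / (2 * χ)) ^ 2 := him
      _ ≤ (α * σ) ^ 2 := by nlinarith
  rw [gaussFun, Complex.norm_exp, Real.exp_le_exp]
  have hre : (-(z - (μ : ℂ)) ^ 2 / (σ : ℂ) ^ 2).re
      = (z.im ^ 2 - (z.re - μ) ^ 2) / σ ^ 2 := by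
    have hσ' : ((σ : ℂ)) ^ 2 = ((σ ^ 2 : ℝ) : ℂ) := by push_cast; ring
    rw [hσ', Complex.div_ofReal_re]
    simp [Complex.sub_re, Complex.sub_im, pow_two, Complex.mul_re, Complex.mul_im]
  rw [hre]
  rw [div_le_iff₀ (by positivity)]
  nlinarith [sq_nonneg (z.re - μ)]
end

section
/- Let σ > 0, μ ∈ ℝ, and let f_{σ,μ} be the Gaussian function. Then for every α > 0 and every nonnegative integer k, the best approximation error satisfies E_k(f_{σ,μ}) ≤ (2/(ασ)) e^{α²} (1 + ασ)^{−k}. -/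
section AuxGauss

open Polynomial Complex Metric Real

lemma natDegree_T_le (n : ℕ) : (Polynomial.Chebyshev.T ℝ (n : ℤ)).natDegree ≤ n := by
  induction n using Nat.strong_induction_on with
  | _ n ih =>
    match n with
    | 0 => simp
    | 1 => simp
    | (m+2) =>
      have h1 : (Polynomial.Chebyshev.T ℝ ((m+1 : ℕ) : ℤ)).natDegree ≤ m + 1 := ih (m+1) (by omega)
      have h0 : (Polynomial.Chebyshev.T ℝ ((m : ℕ) : ℤ)).natDegree ≤ m := ih m (by omega)
      rw [show ((m+2 : ℕ) : ℤ) = (m : ℤ) + 2 by push_cast; ring, Polynomial.Chebyshev.T_add_two]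
      rw [show ((m : ℤ) + 1) = ((m+1 : ℕ) : ℤ) by push_cast; ring] at *
      refine le_trans (Polynomial.natDegree_sub_le _ _) ?_
      simp only [max_le_iff]
      constructor
      · have h2 : (2 * Polynomial.X : ℝ[X]).natDegree ≤ 1 := by
          refine le_trans (Polynomial.natDegree_mul_le) ?_
          simp
        have := Polynomial.natDegree_mul_le (p := (2 * Polynomial.X : ℝ[X]))
            (q := Polynomial.Chebyshev.T ℝ ((m+1 : ℕ) : ℤ))
        omega
      · omega

lemma sum_Icc_int {M : Type*} [AddCommMonoid M] (f : ℤ → M) (k : ℕ) :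
    ∑ m ∈ Finset.Icc (-(k:ℤ)) k, f m
      = f 0 + ∑ n ∈ Finset.range k, (f (n+1) + f (-(n+1))) := by
  induction k with
  | zero => simp
  | succ k ih =>
    have h : Finset.Icc (-(k+1:ℕ):ℤ) (k+1:ℕ)
        = insert ((k:ℤ)+1) (insert (-((k:ℤ)+1)) (Finset.Icc (-(k:ℤ)) k)) := by
      ext m
      simp only [Finset.mem_Icc, Finset.mem_insert]
      push_cast
      omega
    rw [h, Finset.sum_insert, Finset.sum_insert, ih, Finset.sum_range_succ]
    · push_cast
      abel
    · simp only [Finset.mem_Icc]; omega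
    · simp only [Finset.mem_insert, Finset.mem_Icc]; omega

lemma gauss_norm_le {σ μ α : ℝ} (hσ : 0 < σ) {z : ℂ} (him : |z.im| ≤ α * σ) :
    ‖gaussFun σ μ z‖ ≤ Real.exp (α ^ 2) := by
  rw [gaussFun, Complex.norm_exp, Real.exp_le_exp]
  have h1 : (-(z - (μ:ℂ)) ^ 2 / (σ:ℂ) ^ 2).re = (z.im ^ 2 - (z.re - μ) ^ 2) / σ ^ 2 := by
    have h2 : ((σ:ℂ))^2 = ((σ^2 : ℝ) : ℂ) := by push_cast; ring
    rw [h2, Complex.div_ofReal_re]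
    simp only [pow_two, Complex.neg_re, Complex.mul_re, Complex.sub_re, Complex.sub_im,
      Complex.ofReal_re, Complex.ofReal_im]
    ring
  rw [h1]
  have hσ2 : (0:ℝ) < σ ^ 2 := by positivity
  rw [div_le_iff₀ hσ2]
  have h3 : |z.im| * |z.im| ≤ (α * σ) * (α * σ) :=
    mul_le_mul him him (abs_nonneg _) (le_trans (abs_nonneg _) him)
  rw [abs_mul_abs_self] at h3
  nlinarith [sq_nonneg (z.re - μ)]

lemma gauss_diff (σ μ : ℝ) : Differentiable ℂ (gaussFun σ μ) := by
  apply Complex.differentiable_exp.comp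
  apply Differentiable.div_const
  exact (((differentiable_id.sub_const _).pow 2)).neg

lemma integrand_diff (σ μ : ℝ) (m : ℤ) {z : ℂ} (hz : z ≠ 0) :
    DifferentiableAt ℂ (fun w : ℂ => gaussFun σ μ ((w + w⁻¹) / 2) * w ^ m) z := by
  have h1 : DifferentiableAt ℂ (fun w : ℂ => (w + w⁻¹) / 2) z :=
    (differentiableAt_id.add (differentiableAt_inv hz)).div_const 2
  exact ((gauss_diff σ μ ((z + z⁻¹)/2)).comp z h1).mul (differentiableAt_zpow.mpr (Or.inl hz))

lemma J_shift (σ μ : ℝ) (m : ℤ) {r R : ℝ} (h0 : 0 < r) (hle : r ≤ R) :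
    (∮ w in C(0, R), gaussFun σ μ ((w + w⁻¹) / 2) * w ^ m)
      = ∮ w in C(0, r), gaussFun σ μ ((w + w⁻¹) / 2) * w ^ m := by
  apply circleIntegral_eq_of_differentiable_on_annulus_off_countable h0 hle
    (Set.countable_empty)
  · intro z hz
    have hz0 : z ≠ 0 := fun h => hz.2 (by simp [h, Metric.mem_ball, h0])
    exact (integrand_diff σ μ m hz0).continuousAt.continuousWithinAt
  · intro z hz
    have hz0 : z ≠ 0 := fun h => hz.1.2 (by simp [h, Metric.mem_closedBall, h0.le])
    exact integrand_diff σ μ m hz0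

lemma im_joukowski {t r : ℝ} (ht : 0 < t) (hr1 : (1+t)⁻¹ ≤ r) (hr2 : r ≤ 1+t) {z : ℂ}
    (hz : ‖z‖ = r) : |((z + z⁻¹) / 2).im| ≤ t := by
  have hχ : (0:ℝ) < 1 + t := by linarith
  have hr0 : 0 < r := lt_of_lt_of_le (by positivity) hr1
  have hz0 : z ≠ 0 := by
    intro h; rw [h] at hz; exact hr0.ne' (by simpa using hz.symm)
  have him : ((z + z⁻¹) / 2).im = z.im * (1 - (r^2)⁻¹) / 2 := by
    rw [show (2:ℂ) = ((2:ℝ):ℂ) by norm_num, Complex.div_ofReal_im, Complex.add_im,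
      Complex.inv_im]
    have hnsq : Complex.normSq z = r ^ 2 := by
      rw [Complex.normSq_eq_norm_sq, hz]
    rw [hnsq]
    field_simp
    ring
  have habs : |z.im| ≤ r := by
    have := Complex.abs_im_le_norm z
    rwa [hz] at this
  rw [him]
  have h1 : |z.im * (1 - (r^2)⁻¹) / 2| = |z.im| * |1 - (r^2)⁻¹| / 2 := by
    rw [abs_div, abs_mul]; norm_num
  rw [h1]
  have h2 : |z.im| * |1 - (r^2)⁻¹| ≤ r * |1 - (r^2)⁻¹| :=
    mul_le_mul_of_nonneg_right habs (abs_nonneg _)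
  have h3 : r * |1 - (r^2)⁻¹| = |r - r⁻¹| := by
    have he : r - r⁻¹ = r * (1 - (r^2)⁻¹) := by field_simp
    rw [he, abs_mul, abs_of_pos hr0]
  have hinv1 : r⁻¹ ≤ 1 + t := by
    have := inv_anti₀ (by positivity : (0:ℝ) < (1+t)⁻¹) hr1
    rwa [inv_inv] at this
  have hinv2 : (1+t)⁻¹ ≤ r⁻¹ := inv_anti₀ hr0 hr2
  have h4 : |r - r⁻¹| ≤ (1+t) - (1+t)⁻¹ := by
    rw [abs_le]
    constructor <;> linarith
  have h5 : (1+t) - (1+t)⁻¹ ≤ 2 * t := by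
    have hm : (1+t) * (1+t)⁻¹ = 1 := mul_inv_cancel₀ hχ.ne'
    nlinarith [inv_pos.mpr hχ]
  calc |z.im| * |1 - (r^2)⁻¹| / 2 ≤ |r - r⁻¹| / 2 := by rw [← h3]; linarith
    _ ≤ t := by linarith

lemma J_norm_le (σ μ α : ℝ) (hσ : 0 < σ) (hα : 0 < α) (n : ℤ) {r : ℝ}
    (hr1 : (1+α*σ)⁻¹ ≤ r) (hr2 : r ≤ 1+α*σ) :
    ‖∮ w in C(0, r), gaussFun σ μ ((w + w⁻¹) / 2) * w ^ (-(n+1))‖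
      ≤ 2 * Real.pi * Real.exp (α^2) * r ^ (-n) := by
  have ht : 0 < α * σ := mul_pos hα hσ
  have hr0 : 0 < r := lt_of_lt_of_le (by positivity) hr1
  have key : ∀ z ∈ sphere (0:ℂ) r,
      ‖gaussFun σ μ ((z + z⁻¹) / 2) * z ^ (-(n+1))‖ ≤ Real.exp (α^2) * r ^ (-(n+1)) := by
    intro z hz
    rw [mem_sphere_zero_iff_norm] at hz
    rw [norm_mul, norm_zpow, hz]
    apply mul_le_mul_of_nonneg_right _ (by positivity)
    exact gauss_norm_le hσ (im_joukowski ht hr1 hr2 hz)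
  have hb := circleIntegral.norm_integral_le_of_norm_le_const hr0.le key
  have hz : r * r ^ (-(n+1)) = r ^ (-n) := by
    rw (occs := .pos [1]) [← zpow_one r]
    rw [← zpow_add₀ hr0.ne']
    congr 1
    omega
  calc ‖∮ w in C(0, r), gaussFun σ μ ((w + w⁻¹) / 2) * w ^ (-(n+1))‖
      ≤ 2 * Real.pi * r * (Real.exp (α^2) * r ^ (-(n+1))) := hb
    _ = 2 * Real.pi * Real.exp (α^2) * (r * r ^ (-(n+1))) := by ring
    _ = 2 * Real.pi * Real.exp (α^2) * r ^ (-n) := by rw [hz]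

noncomputable def gp (σ μ : ℝ) : ℝ → ℂ := fun θ => gaussFun σ μ (Real.cos θ)

lemma gp_periodic (σ μ : ℝ) : Function.Periodic (gp σ μ) (2 * Real.pi) := fun θ => by
  simp [gp, Real.cos_add_two_pi]

lemma gp_continuous (σ μ : ℝ) : Continuous (gp σ μ) :=
  (gauss_diff σ μ).continuous.comp (Complex.continuous_ofReal.comp Real.continuous_cos)

noncomputable def G (σ μ : ℝ) : C(AddCircle (2 * Real.pi), ℂ) :=
  ⟨(gp_periodic σ μ).lift, (gp_continuous σ μ).quotient_liftOn' _⟩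

lemma G_coe (σ μ : ℝ) (θ : ℝ) : G σ μ (θ : AddCircle (2 * Real.pi)) = gp σ μ θ := rfl

lemma key_eq (σ μ : ℝ) (n : ℤ) (θ : ℝ) :
    deriv (circleMap 0 1) θ •
      (gaussFun σ μ ((circleMap 0 1 θ + (circleMap 0 1 θ)⁻¹) / 2)
        * circleMap 0 1 θ ^ (-(n+1) : ℤ))
    = Complex.I * ((fourier (-n) (θ : AddCircle (2 * Real.pi))) • G σ μ θ) := by
  have hcm : circleMap 0 1 θ = Complex.exp (θ * Complex.I) := by
    simp [circleMap]
  rw [deriv_circleMap, hcm, G_coe]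
  have hfour : (fourier (-n) (θ : AddCircle (2 * Real.pi)) : ℂ)
      = Complex.exp (-n * (θ * Complex.I)) := by
    rw [fourier_coe_apply]
    congr 1
    push_cast
    have : (Real.pi : ℂ) ≠ 0 := by exact_mod_cast Real.pi_ne_zero
    field_simp
  rw [hfour]
  have hgp : gp σ μ θ
      = gaussFun σ μ ((Complex.exp (θ * Complex.I) + (Complex.exp (θ * Complex.I))⁻¹) / 2) := by
    rw [gp]
    congr 1
    rw [Complex.ofReal_cos, Complex.cos, ← Complex.exp_neg]
    ring_nf
  rw [hgp]
  have hzp : Complex.exp (θ * Complex.I) * Complex.exp (θ * Complex.I) ^ (-(n+1) : ℤ)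
      = Complex.exp (-n * (θ * Complex.I)) := by
    rw (occs := .pos [1]) [← zpow_one (Complex.exp (θ * Complex.I))]
    rw [← zpow_add₀ (Complex.exp_ne_zero _), show ((1:ℤ) + -(n+1)) = -n by ring,
      show (-(n:ℂ) * ((θ:ℂ) * Complex.I)) = (((-n : ℤ) : ℂ) * ((θ:ℂ) * Complex.I)) by push_cast; ring,
      Complex.exp_int_mul]
  rw [smul_eq_mul, smul_eq_mul]
  calc Complex.exp (θ * Complex.I) * Complex.I *
        (gaussFun σ μ ((Complex.exp (θ * Complex.I) + (Complex.exp (θ * Complex.I))⁻¹) / 2)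
          * Complex.exp (θ * Complex.I) ^ (-(n+1) : ℤ))
      = Complex.I * ((Complex.exp (θ * Complex.I) * Complex.exp (θ * Complex.I) ^ (-(n+1) : ℤ))
          * gaussFun σ μ ((Complex.exp (θ * Complex.I) + (Complex.exp (θ * Complex.I))⁻¹) / 2)) := by
        ring
    _ = _ := by rw [hzp]

instance : Fact (0 < 2 * Real.pi) := ⟨Real.two_pi_pos⟩

lemma coeff_eq (σ μ : ℝ) (n : ℤ) :
    (∮ w in C(0, 1), gaussFun σ μ ((w + w⁻¹) / 2) * w ^ (-(n+1) : ℤ))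
      = Complex.I * ((2 * Real.pi : ℝ) • fourierCoeff (⇑(G σ μ)) n) := by
  haveI : Fact (0 < 2 * Real.pi) := ⟨Real.two_pi_pos⟩
  have h1 : fourierCoeff (⇑(G σ μ)) n
      = (1 / (2 * Real.pi) : ℝ) • ∫ x in (0:ℝ)..(0 + 2 * Real.pi),
          fourier (-n) (x : AddCircle (2 * Real.pi)) • G σ μ x :=
    fourierCoeff_eq_intervalIntegral _ n 0
  rw [circleIntegral]
  have h2 : (∫ θ in (0:ℝ)..(2 * Real.pi), deriv (circleMap 0 1) θ •
      (gaussFun σ μ ((circleMap 0 1 θ + (circleMap 0 1 θ)⁻¹) / 2)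
        * circleMap 0 1 θ ^ (-(n+1) : ℤ)))
      = ∫ θ in (0:ℝ)..(2 * Real.pi),
          Complex.I * ((fourier (-n) (θ : AddCircle (2 * Real.pi))) • G σ μ θ) := by
    apply intervalIntegral.integral_congr
    intro θ _
    exact key_eq σ μ n θ
  simp only [zero_add] at h1
  rw [h2, intervalIntegral.integral_const_mul, h1, smul_smul]
  rw [mul_one_div_cancel Real.two_pi_pos.ne', one_smul]

lemma coeff_norm_le (σ μ α : ℝ) (hσ : 0 < σ) (hα : 0 < α) (n : ℤ) :
    ‖fourierCoeff (⇑(G σ μ)) n‖ ≤ Real.exp (α^2) * ((1+α*σ)⁻¹) ^ n.natAbs := by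
  have ht : 0 < α * σ := mul_pos hα hσ
  have hχ0 : (0:ℝ) < 1 + α * σ := by linarith
  have h1χ : (1:ℝ) ≤ 1 + α * σ := by linarith
  have hχi : (1 + α*σ)⁻¹ ≤ 1 := by
    rw [inv_le_one_iff₀]; right; exact h1χ
  have hχii : (1 + α*σ)⁻¹ ≤ 1 + α*σ := le_trans hχi h1χ
  have hnorm : ‖(∮ w in C(0, 1), gaussFun σ μ ((w + w⁻¹) / 2) * w ^ (-(n+1) : ℤ))‖
      = 2 * Real.pi * ‖fourierCoeff (⇑(G σ μ)) n‖ := by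
    rw [coeff_eq, norm_mul, Complex.norm_I, one_mul, norm_smul, Real.norm_eq_abs,
      abs_of_pos Real.two_pi_pos]
  have main : 2 * Real.pi * ‖fourierCoeff (⇑(G σ μ)) n‖
      ≤ 2 * Real.pi * (Real.exp (α^2) * ((1+α*σ)⁻¹) ^ n.natAbs) := by
    rcases le_or_gt 0 n with hn | hn
    · have hsh := J_shift σ μ (-(n+1)) one_pos h1χ
      have hb := J_norm_le σ μ α hσ hα n hχii (le_refl _)
      rw [hsh, hnorm] at hb
      have hz : (1+α*σ) ^ (-n : ℤ) = ((1+α*σ)⁻¹) ^ n.natAbs := by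
        rw [zpow_neg, ← inv_zpow, ← zpow_natCast]
        congr 1
        omega
      rw [hz] at hb
      calc 2 * Real.pi * ‖fourierCoeff (⇑(G σ μ)) n‖
          ≤ 2 * Real.pi * Real.exp (α^2) * ((1+α*σ)⁻¹) ^ n.natAbs := hb
        _ = 2 * Real.pi * (Real.exp (α^2) * ((1+α*σ)⁻¹) ^ n.natAbs) := by ring
    · have hsh := J_shift σ μ (-(n+1)) (inv_pos.mpr hχ0) hχi
      have hb := J_norm_le σ μ α hσ hα n (le_refl _) hχii
      rw [← hsh, hnorm] at hb
      have hz : ((1+α*σ)⁻¹) ^ (-n : ℤ) = ((1+α*σ)⁻¹) ^ n.natAbs := by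
        rw [← zpow_natCast]
        congr 1
        omega
      rw [hz] at hb
      calc 2 * Real.pi * ‖fourierCoeff (⇑(G σ μ)) n‖
          ≤ 2 * Real.pi * Real.exp (α^2) * ((1+α*σ)⁻¹) ^ n.natAbs := hb
        _ = 2 * Real.pi * (Real.exp (α^2) * ((1+α*σ)⁻¹) ^ n.natAbs) := by ring
  exact le_of_mul_le_mul_left main Real.two_pi_pos

lemma fourier_eq (m : ℤ) (θ : ℝ) :
    (fourier m (θ : AddCircle (2 * Real.pi)) : ℂ) = Complex.exp (m * (θ * Complex.I)) := by
  rw [fourier_coe_apply]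
  congr 1
  push_cast
  have : (Real.pi : ℂ) ≠ 0 := by exact_mod_cast Real.pi_ne_zero
  field_simp

lemma fourier_norm_one (m : ℤ) (θ : ℝ) :
    ‖(fourier m (θ : AddCircle (2 * Real.pi)) : ℂ)‖ = 1 := by
  rw [fourier_eq, Complex.norm_exp]
  have : ((m : ℂ) * (θ * Complex.I)).re = 0 := by simp
  rw [this, Real.exp_zero]

lemma gauss_real (σ μ x : ℝ) :
    gaussFun σ μ (x : ℂ) = ((Real.exp (-(x - μ)^2 / σ^2) : ℝ) : ℂ) := by
  rw [gaussFun, Complex.ofReal_exp]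
  congr 1
  push_cast
  ring

lemma gp_even (σ μ θ : ℝ) : gp σ μ (-θ) = gp σ μ θ := by
  simp [gp, Real.cos_neg]

lemma coeff_even (σ μ : ℝ) (n : ℤ) :
    fourierCoeff (⇑(G σ μ)) (-n) = fourierCoeff (⇑(G σ μ)) n := by
  have h1 := fourierCoeff_eq_intervalIntegral (⇑(G σ μ)) (-n) (-Real.pi)
  have h2 := fourierCoeff_eq_intervalIntegral (⇑(G σ μ)) n (-Real.pi)
  rw [show -Real.pi + 2 * Real.pi = Real.pi by ring] at h1 h2
  rw [h1, h2]
  congr 1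
  have key : ∀ x : ℝ, (fourier (-(-n)) ((-x : ℝ) : AddCircle (2 * Real.pi))
      • G σ μ ((-x : ℝ) : AddCircle (2 * Real.pi)))
      = fourier (-n) ((x : ℝ) : AddCircle (2 * Real.pi)) • G σ μ (x : AddCircle (2 * Real.pi)) := by
    intro x
    rw [G_coe, G_coe, gp_even, fourier_eq, fourier_eq]
    congr 2
    push_cast
    ring
  calc (∫ x in (-Real.pi)..Real.pi, fourier (-(-n)) (x : AddCircle (2 * Real.pi)) • G σ μ x)
      = ∫ x in (-Real.pi)..Real.pi, fourier (-(-n)) ((-x : ℝ) : AddCircle (2 * Real.pi))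
          • G σ μ ((-x : ℝ) : AddCircle (2 * Real.pi)) := by
        rw [intervalIntegral.integral_comp_neg
          (fun y => fourier (-(-n)) ((y : ℝ) : AddCircle (2 * Real.pi)) • G σ μ (y : AddCircle (2 * Real.pi)))]
        norm_num
    _ = ∫ x in (-Real.pi)..Real.pi, fourier (-n) (x : AddCircle (2 * Real.pi)) • G σ μ x := by
        apply intervalIntegral.integral_congr
        intro x _
        exact key x

/-- Best polynomial approximation of the Gaussian:
`E_k(f_{σ,μ}) ≤ (2/(ασ)) e^{α²} (1 + ασ)^{-k}`. -/
theorem approxError_gauss_le (σ μ α : ℝ) (hσ : 0 < σ) (hα : 0 < α) (k : ℕ) :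
    approxError (fun x : ℝ => Real.exp (-(x - μ) ^ 2 / σ ^ 2)) k ≤
      2 / (α * σ) * Real.exp (α ^ 2) * ((1 + α * σ) ^ k)⁻¹ := by
  classical
  have ht : 0 < α * σ := mul_pos hα hσ
  set A := Real.exp (α ^ 2) with hA
  have hA0 : 0 < A := Real.exp_pos _
  set ρ : ℝ := (1 + α * σ)⁻¹ with hρ
  have hχ1 : (1:ℝ) < 1 + α * σ := by linarith
  have hρ0 : 0 < ρ := by positivity
  have hρ1 : ρ < 1 := by
    rw [hρ, inv_lt_one_iff₀]; right; exact hχ1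
  set c : ℤ → ℂ := fourierCoeff (⇑(G σ μ)) with hc
  set b : ℤ → ℝ := fun m => A * ρ ^ m.natAbs with hbdef
  have hb : ∀ m, ‖c m‖ ≤ b m := fun m => coeff_norm_le σ μ α hσ hα m
  have hgeo : HasSum (fun m : ℕ => A * ρ ^ m) (A * (1 - ρ)⁻¹) := by
    simpa [div_eq_mul_inv] using (hasSum_geometric_of_lt_one hρ0.le hρ1).mul_left A
  have hgeo' : HasSum (fun m : ℕ => b (-(m+1))) (A * ρ * (1 - ρ)⁻¹) := by
    have h2 := (hasSum_geometric_of_lt_one hρ0.le hρ1).mul_left (A * ρ)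
    have : (fun m : ℕ => b (-(m+1))) = fun m : ℕ => A * ρ * ρ ^ m := by
      funext m
      rw [hbdef]
      simp only []
      rw [show ((-((m:ℤ)+1)).natAbs) = m + 1 by omega, pow_succ]
      ring
    rw [this]
    simpa [div_eq_mul_inv] using h2
  have htot : HasSum b (A * (1 - ρ)⁻¹ + A * ρ * (1 - ρ)⁻¹) := by
    apply HasSum.of_nat_of_neg_add_one _ hgeo'
    have : (fun m : ℕ => b m) = fun m : ℕ => A * ρ ^ m := by
      funext m; rw [hbdef]; simp
    rw [this]; exact hgeo
  have hsumb : Summable b := htot.summable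
  have hsumc : Summable (fun m : ℤ => ‖c m‖) :=
    Summable.of_nonneg_of_le (fun _ => norm_nonneg _) hb hsumb
  have hsum : Summable c := Summable.of_norm hsumc
  -- the tail sum of the majorant
  set s : Finset ℤ := Finset.Icc (-(k:ℤ)) k with hs
  set B : ℝ := 2 * A * ρ ^ (k+1) * (1 - ρ)⁻¹ with hB
  have h1ρ : (1:ℝ) - ρ ≠ 0 := sub_ne_zero.mpr hρ1.ne'
  have htail : ∑' (m : ↑((↑s : Set ℤ)ᶜ)), b m = B := by
    have hsplit := Summable.sum_add_tsum_compl (s := s) hsumb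
    have hfin : ∑ m ∈ s, b m = A + ∑ n ∈ Finset.range k, 2 * (A * ρ ^ (n+1)) := by
      rw [hs, sum_Icc_int b k]
      congr 1
      · rw [hbdef]; simp
      · apply Finset.sum_congr rfl
        intro n _
        rw [hbdef]
        simp only []
        rw [show (((n:ℤ)+1)).natAbs = n + 1 by omega, show ((-((n:ℤ)+1)).natAbs) = n + 1 by omega]
        ring
    have hgeosum : ∑ n ∈ Finset.range k, (ρ:ℝ) ^ n = (ρ^k - 1)/(ρ - 1) := geom_sum_eq hρ1.ne k
    have hfin2 : ∑ n ∈ Finset.range k, 2 * (A * ρ ^ (n+1)) = 2 * A * ρ * ((ρ^k - 1)/(ρ - 1)) := by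
      rw [← hgeosum, Finset.mul_sum]
      apply Finset.sum_congr rfl
      intro n _
      rw [pow_succ]
      ring
    rw [htot.tsum_eq, hfin, hfin2] at hsplit
    have hρm1 : ρ - 1 ≠ 0 := sub_ne_zero.mpr hρ1.ne
    have hident : A * (1 - ρ)⁻¹ + A * ρ * (1 - ρ)⁻¹
        - (A + 2 * A * ρ * ((ρ^k - 1)/(ρ - 1))) = 2 * A * ρ ^ (k+1) * (1 - ρ)⁻¹ := by
      field_simp
      ring
    rw [hB]
    linarith [hident, hsplit]
  -- partial sums and the tail bound
  have key : ∀ θ : ℝ, ‖G σ μ (θ : AddCircle (2 * Real.pi))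
      - ∑ m ∈ s, c m • (fourier m (θ : AddCircle (2 * Real.pi)) : ℂ)‖ ≤ B := by
    intro θ
    set F : ℤ → ℂ := fun m => c m • (fourier m (θ : AddCircle (2 * Real.pi)) : ℂ) with hF
    have hFnorm : ∀ m, ‖F m‖ = ‖c m‖ := fun m => by
      rw [hF]; simp only [smul_eq_mul, norm_mul, fourier_norm_one, mul_one]
    have hFsumnorm : Summable (fun m => ‖F m‖) := by
      have : (fun m => ‖F m‖) = fun m => ‖c m‖ := funext hFnorm
      rw [this]; exact hsumc
    have hFsum : Summable F := Summable.of_norm hFsumnorm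
    have hps : HasSum F (G σ μ (θ : AddCircle (2 * Real.pi))) :=
      has_pointwise_sum_fourier_series_of_summable hsum _
    have hsplit := Summable.sum_add_tsum_compl (s := s) hFsum
    rw [hps.tsum_eq] at hsplit
    have hdiff : G σ μ (θ : AddCircle (2 * Real.pi)) - ∑ m ∈ s, F m
        = ∑' (m : ↑((↑s : Set ℤ)ᶜ)), F m := by
      rw [← hsplit]; ring
    rw [hdiff]
    calc ‖∑' (m : ↑((↑s : Set ℤ)ᶜ)), F m‖
        ≤ ∑' (m : ↑((↑s : Set ℤ)ᶜ)), ‖F m‖ :=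
          norm_tsum_le_tsum_norm (hFsumnorm.subtype _)
      _ ≤ ∑' (m : ↑((↑s : Set ℤ)ᶜ)), b m := by
          apply Summable.tsum_le_tsum
          · intro m
            rw [hFnorm]
            exact hb m
          · exact hFsumnorm.subtype _
          · exact hsumb.subtype _
      _ = B := htail
  -- the polynomial
  set p : ℝ[X] := Polynomial.C ((c 0).re)
      + ∑ n ∈ Finset.range k, Polynomial.C (2 * (c ((n:ℤ)+1)).re)
          * Polynomial.Chebyshev.T ℝ ((n:ℤ)+1) with hp
  have hdeg : p.natDegree ≤ k := by
    rw [hp]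
    apply le_trans (Polynomial.natDegree_add_le _ _)
    rw [max_le_iff]
    constructor
    · simp
    · apply Polynomial.natDegree_sum_le_of_forall_le
      intro n hn
      apply le_trans (Polynomial.natDegree_mul_le)
      rw [Finset.mem_range] at hn
      have hT := natDegree_T_le (n+1)
      rw [show (((n+1:ℕ)):ℤ) = (n:ℤ)+1 by push_cast; ring] at hT
      simp only [Polynomial.natDegree_C, zero_add]
      omega
  -- evaluation identity
  have heval : ∀ θ : ℝ, p.eval (Real.cos θ)
      = (∑ m ∈ s, c m • (fourier m (θ : AddCircle (2 * Real.pi)) : ℂ)).re := by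
    intro θ
    rw [hs, sum_Icc_int (fun m => c m • (fourier m (θ : AddCircle (2 * Real.pi)) : ℂ)) k]
    have h0 : (c 0 • (fourier 0 (θ : AddCircle (2 * Real.pi)) : ℂ)) = c 0 := by
      rw [smul_eq_mul, _root_.fourier_eq]
      simp
    have hpair : ∀ n : ℕ, c ((n:ℤ)+1) • (fourier ((n:ℤ)+1) (θ : AddCircle (2 * Real.pi)) : ℂ)
        + c (-((n:ℤ)+1)) • (fourier (-((n:ℤ)+1)) (θ : AddCircle (2 * Real.pi)) : ℂ)
        = ((2 * Real.cos (((n:ℕ)+1) * θ) : ℝ) : ℂ) * c ((n:ℤ)+1) := by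
      intro n
      rw [hc, coeff_even, ← hc, smul_eq_mul, smul_eq_mul, ← mul_add, _root_.fourier_eq, _root_.fourier_eq,
        mul_comm]
      congr 1
      rw [Complex.ofReal_mul, Complex.ofReal_cos, Complex.cos]
      push_cast
      rw [show (((n:ℂ)+1) * (θ:ℂ) * Complex.I) = ((n:ℂ)+1) * ((θ:ℂ) * Complex.I) by ring,
        show (-(((n:ℂ)+1) * (θ:ℂ)) * Complex.I) = (-((n:ℂ)+1)) * ((θ:ℂ) * Complex.I) by ring]
      ring
    rw [Finset.sum_congr rfl (fun n _ => hpair n), h0]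
    rw [Complex.add_re]
    have hre : (∑ n ∈ Finset.range k, ((2 * Real.cos (((n:ℕ)+1) * θ) : ℝ) : ℂ) * c ((n:ℤ)+1)).re
        = ∑ n ∈ Finset.range k, 2 * Real.cos (((n:ℕ)+1) * θ) * (c ((n:ℤ)+1)).re := by
      rw [Complex.re_sum]
      apply Finset.sum_congr rfl
      intro n _
      rw [Complex.re_ofReal_mul]
    rw [hre, hp]
    simp only [Polynomial.eval_add, Polynomial.eval_C, Polynomial.eval_finset_sum,
      Polynomial.eval_mul]
    congr 1
    apply Finset.sum_congr rfl
    intro n _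
    rw [Polynomial.Chebyshev.T_real_cos]
    push_cast
    ring
  -- pointwise error bound
  have herr : ∀ x : Set.Icc (-1:ℝ) 1,
      |Real.exp (-(x.1 - μ) ^ 2 / σ ^ 2) - p.eval x.1| ≤ B := by
    intro x
    set θ := Real.arccos x.1 with hθ
    have hcos : Real.cos θ = x.1 := Real.cos_arccos x.2.1 x.2.2
    have hgpre : (gp σ μ θ).re = Real.exp (-(x.1 - μ) ^ 2 / σ ^ 2) := by
      rw [show gp σ μ θ = gaussFun σ μ ((Real.cos θ : ℝ) : ℂ) from rfl, gauss_real, hcos]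
      exact Complex.ofReal_re _
    have hGθ : G σ μ (θ : AddCircle (2 * Real.pi)) = gp σ μ θ := G_coe σ μ θ
    have h1 : Real.exp (-(x.1 - μ) ^ 2 / σ ^ 2) - p.eval x.1
        = (G σ μ (θ : AddCircle (2 * Real.pi))
            - ∑ m ∈ s, c m • (fourier m (θ : AddCircle (2 * Real.pi)) : ℂ)).re := by
      rw [Complex.sub_re, hGθ, hgpre, ← hcos, heval θ]
    rw [h1]
    calc |(G σ μ (θ : AddCircle (2 * Real.pi))
            - ∑ m ∈ s, c m • (fourier m (θ : AddCircle (2 * Real.pi)) : ℂ)).re|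
        ≤ ‖G σ μ (θ : AddCircle (2 * Real.pi))
            - ∑ m ∈ s, c m • (fourier m (θ : AddCircle (2 * Real.pi)) : ℂ)‖ := by
          exact Complex.abs_re_le_norm _
      _ ≤ B := key θ
  -- conclude
  haveI : Nonempty (Set.Icc (-1:ℝ) 1) := ⟨⟨0, by norm_num⟩⟩
  have hsup : (⨆ x : Set.Icc (-1:ℝ) 1,
      |Real.exp (-(x.1 - μ) ^ 2 / σ ^ 2) - p.eval x.1|) ≤ B := ciSup_le herr
  have hBval : B = 2 / (α * σ) * A * ((1 + α * σ) ^ k)⁻¹ := by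
    rw [hB, hρ]
    have hχ0 : (0:ℝ) < 1 + α * σ := by linarith
    have h1 : (1:ℝ) - (1 + α * σ)⁻¹ = (α * σ) / (1 + α * σ) := by
      field_simp
      ring
    rw [h1]
    rw [inv_pow]
    field_simp
    ring
  have hbdd : BddBelow {e : ℝ | ∃ q : Polynomial ℝ, q.natDegree ≤ k ∧
      e = ⨆ x : Set.Icc (-1 : ℝ) 1,
        |Real.exp (-(x.1 - μ) ^ 2 / σ ^ 2) - q.eval x.1|} := by
    refine ⟨0, ?_⟩
    rintro e ⟨q, hq, rfl⟩
    exact Real.iSup_nonneg (fun x => abs_nonneg _)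
  have hmem : (⨆ x : Set.Icc (-1:ℝ) 1,
      |Real.exp (-(x.1 - μ) ^ 2 / σ ^ 2) - p.eval x.1|) ∈ {e : ℝ | ∃ q : Polynomial ℝ,
        q.natDegree ≤ k ∧ e = ⨆ x : Set.Icc (-1 : ℝ) 1,
          |Real.exp (-(x.1 - μ) ^ 2 / σ ^ 2) - q.eval x.1|} := ⟨p, hdeg, rfl⟩
  calc approxError (fun x : ℝ => Real.exp (-(x - μ) ^ 2 / σ ^ 2)) k
      ≤ ⨆ x : Set.Icc (-1:ℝ) 1, |Real.exp (-(x.1 - μ) ^ 2 / σ ^ 2) - p.eval x.1| :=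
        csInf_le hbdd hmem
    _ ≤ B := hsup
    _ = 2 / (α * σ) * A * ((1 + α * σ) ^ k)⁻¹ := hBval

end AuxGauss
end

section
/- Let A, B ∈ ℂ^{n×n} be Hermitian matrices such that the graph induced by B is a spanning subgraph of the graph G_A induced by A (i.e. B_{il} ≠ 0 implies A_{il} ≠ 0 for all distinct i, l), and let d be the geodesic distance in G_A valued in ℕ∞. Fix an index j and a positive integer m, and assume A_{il} = B_{il} for all i, l with d(j,i) ≤ m and d(j,l) ≤ m. Then for every integer k with 1 ≤ k ≤ m, one has (A^k)_{il} = (B^k)_{il} for all i, l with d(j,i) ≤ m − k + 1 and d(j,l) ≤ m − k + 1. -/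
/-- The simple graph induced by a Hermitian matrix: distinct `i`, `j` are adjacent
iff `A i j ≠ 0`. -/
def inducedGraph {n : ℕ} (A : Matrix (Fin n) (Fin n) ℂ) (hA : A.IsHermitian) :
    SimpleGraph (Fin n) where
  Adj i j := i ≠ j ∧ A i j ≠ 0
  symm := ⟨by
    rintro i j ⟨hij, hAij⟩
    refine ⟨hij.symm, fun h => hAij ?_⟩
    rw [← hA.apply i j, h, star_zero]⟩
  loopless := ⟨fun i h => h.1 rfl⟩

/-- Continuous functional calculus for a Hermitian matrix via the spectral theorem:
`g(A) = X g(Λ) X*`. -/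
noncomputable def hermFC {n : ℕ} (g : ℝ → ℝ) {A : Matrix (Fin n) (Fin n) ℂ}
    (hA : A.IsHermitian) : Matrix (Fin n) (Fin n) ℂ :=
  (hA.eigenvectorUnitary : Matrix (Fin n) (Fin n) ℂ) *
    Matrix.diagonal (fun i => (g (hA.eigenvalues i) : ℂ)) *
    (star hA.eigenvectorUnitary : Matrix (Fin n) (Fin n) ℂ)

/-- If `A` and `B` agree on the ball of geodesic radius `m` around `j` (distances taken
in the graph induced by `A`, of which the graph induced by `B` is a spanning subgraph),
then `A^k` and `B^k` agree on the ball of radius `m - k + 1` for `1 ≤ k ≤ m`. -/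
theorem pow_entry_eq_of_agree_on_ball {n : ℕ} (A B : Matrix (Fin n) (Fin n) ℂ)
    (hA : A.IsHermitian) (hB : B.IsHermitian)
    (hsub : ∀ i l : Fin n, i ≠ l → B i l ≠ 0 → A i l ≠ 0)
    (j : Fin n) (m : ℕ) (hm : 0 < m)
    (hagree : ∀ i l : Fin n, (inducedGraph A hA).edist j i ≤ (m : ℕ∞) →
      (inducedGraph A hA).edist j l ≤ (m : ℕ∞) → A i l = B i l)
    (k : ℕ) (hk1 : 1 ≤ k) (hkm : k ≤ m) :
    ∀ i l : Fin n, (inducedGraph A hA).edist j i ≤ ((m - k + 1 : ℕ) : ℕ∞) →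
      (inducedGraph A hA).edist j l ≤ ((m - k + 1 : ℕ) : ℕ∞) →
      (A ^ k) i l = (B ^ k) i l := by
  revert hk1 hkm
  induction k with
  | zero => omega
  | succ k ih =>
    intro hk1 hkm i l hi hl
    rcases Nat.eq_zero_or_pos k with rfl | hkpos
    · simp only [zero_add, pow_one]
      have h1 : (m - 1 + 1 : ℕ) = m := by omega
      rw [h1] at hi hl
      exact hagree i l hi hl
    · have harith : (m - (k + 1) + 1 : ℕ) = m - k := by omega
      rw [harith] at hi hl
      have hcast : ∀ a b : ℕ, a ≤ b → ((a : ℕ∞) ≤ (b : ℕ∞)) := fun a b h => by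
        exact_mod_cast h
      have hA0B0 : ∀ p l' : Fin n, (inducedGraph A hA).edist j l' ≤ (m : ℕ∞) →
          A p l' = 0 → B p l' = 0 := by
        intro p l' hl' h0
        by_cases hpl : p = l'
        · subst hpl; rw [← hagree p p hl' hl']; exact h0
        · by_contra hB0
          exact (hsub p l' hpl hB0) h0
      have hl_m : (inducedGraph A hA).edist j l ≤ (m : ℕ∞) :=
        le_trans hl (hcast _ _ (by omega))
      have hi_m1 : (inducedGraph A hA).edist j i ≤ ((m - k + 1 : ℕ) : ℕ∞) :=
        le_trans hi (hcast _ _ (by omega))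
      rw [pow_succ, pow_succ, Matrix.mul_apply, Matrix.mul_apply]
      apply Finset.sum_congr rfl
      intro p _
      by_cases h0 : A p l = 0
      · rw [h0, hA0B0 p l hl_m h0, mul_zero, mul_zero]
      · have hp : (inducedGraph A hA).edist j p ≤ ((m - k + 1 : ℕ) : ℕ∞) := by
          by_cases hpl : p = l
          · subst hpl; exact le_trans hl (hcast _ _ (by omega))
          · have hadj : (inducedGraph A hA).Adj l p := by
              refine ⟨fun h => hpl h.symm, fun h => h0 ?_⟩
              rw [← hA.apply p l, h, star_zero]
            calc (inducedGraph A hA).edist j p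
                ≤ (inducedGraph A hA).edist j l + (inducedGraph A hA).edist l p :=
                  SimpleGraph.edist_triangle
              _ ≤ ((m - k : ℕ) : ℕ∞) + 1 :=
                  add_le_add hl (le_of_eq (SimpleGraph.edist_eq_one_iff_adj.mpr hadj))
              _ = ((m - k + 1 : ℕ) : ℕ∞) := by push_cast; ring
        have hp_m : (inducedGraph A hA).edist j p ≤ (m : ℕ∞) :=
          le_trans hp (hcast _ _ (by omega))
        rw [ih (by omega) (by omega) i p hi_m1 hp, hagree p l hp_m hl_m]
end
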